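/- Let t be a nonnegative integer and n an integer with n ≥ max(8(t+1)^3, 40(t+2)). Then the finite set G_{n,t} is a minimal generating set of S_{n,t} of cardinality n−3t−1: the additive submonoid of ℕ generated by G_{n,t} equals S_{n,t}, for every g ∈ G_{n,t} the element g does not belong to the additive submonoid generated by G_{n,t} \ {g}, and |G_{n,t}| = n−3t−1. In particular S_{n,t} has embedding dimension n−3t−1. -/

import Mathlib

/-- The generating set `G_{n,t}`. -/
def Gset (n t : ℕ) : Set ℕ :=
  {m | (∃ i < t, m = n - 2*t + 4*i ∨ m = n - 2*t + 4*i + 1) ∨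
       (n + 2*t ≤ m ∧ m ≤ 2*n - 4*t - 2) ∨
       (∃ j < t, m = 2*n - 4*t + 4*j - 1)}

/-- The numerical semigroup `S_{n,t}`, the additive submonoid of ℕ generated by `G_{n,t}`. -/
def Sgen (n t : ℕ) : AddSubmonoid ℕ := AddSubmonoid.closure (Gset n t)

theorem stmt_18 (t : ℕ) (n : ℕ) (hn : max (8*(t+1)^3) (40*(t+2)) ≤ n) :
    AddSubmonoid.closure (Gset n t) = Sgen n t ∧
    (∀ g ∈ Gset n t, g ∉ AddSubmonoid.closure (Gset n t \ {g})) ∧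
    (Gset n t).ncard = n - 3*t - 1 := by
  have h40 : 40*(t+2) ≤ n := le_trans (le_max_right _ _) hn
  refine ⟨rfl, ?_, ?_⟩
  · intro g hg hmem
    -- helper: arithmetic consequences of the invariant
    have hP : ∀ x : ℕ, (x = 0 ∨ (x ∈ Gset n t ∧ x ≠ g) ∨ 2*n ≤ x ∨
        (2*n - 4*t ≤ x ∧ x % 4 ≠ (2*n - 4*t + 3) % 4)) →
        x = 0 ∨ (∃ i, i < t ∧ ∃ s, s ≤ 1 ∧ x = n - 2*t + 4*i + s) ∨
        n + 2*t ≤ x ∨ (2*n - 4*t ≤ x ∧ x % 4 ≠ (2*n - 4*t + 3) % 4) := by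
      intro x hx
      rcases hx with rfl | ⟨hxG, -⟩ | hx | hx
      · exact Or.inl rfl
      · rcases hxG with ⟨i, hi, hc⟩ | ⟨h1, h2⟩ | ⟨j, hj, rfl⟩
        · refine Or.inr (Or.inl ?_)
          rcases hc with rfl | rfl
          · exact ⟨i, hi, 0, by omega, by ring⟩
          · exact ⟨i, hi, 1, by omega, by ring⟩
        · exact Or.inr (Or.inr (Or.inl h1))
        · exact Or.inr (Or.inr (Or.inl (by omega)))
      · exact Or.inr (Or.inr (Or.inl (by omega)))
      · exact Or.inr (Or.inr (Or.inr hx))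
    have hQg : g = 0 ∨ (g ∈ Gset n t ∧ g ≠ g) ∨ 2*n ≤ g ∨
        (2*n - 4*t ≤ g ∧ g % 4 ≠ (2*n - 4*t + 3) % 4) := by
      refine AddSubmonoid.closure_induction
        (motive := fun m _ => m = 0 ∨ (m ∈ Gset n t ∧ m ≠ g) ∨ 2*n ≤ m ∨
          (2*n - 4*t ≤ m ∧ m % 4 ≠ (2*n - 4*t + 3) % 4))
        (fun x hx => Or.inr (Or.inl ⟨hx.1, by simpa using hx.2⟩)) (Or.inl rfl) ?_ hmem
      intro x y hxc hyc hx hy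
      rcases hP x hx with rfl | hxA | hxB | hxC
      · simpa using hy
      all_goals rcases hP y hy with rfl | hyA | hyB | hyC
      all_goals try (simpa using hx)
      all_goals refine Or.inr (Or.inr ?_)
      all_goals try obtain ⟨i, hi, s, hs, rfl⟩ := hxA
      all_goals try obtain ⟨i', hi', s', hs', rfl⟩ := hyA
      all_goals omega
    -- derive contradiction
    have hglb : n - 2*t ≤ g ∧ g + 5 ≤ 2*n ∧
        ((∃ i, i < t ∧ ∃ s, s ≤ 1 ∧ g = n - 2*t + 4*i + s) ∨ g ≤ 2*n - 4*t - 2 ∨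
          (∃ j, j < t ∧ g = 2*n - 4*t + 4*j - 1)) := by
      rcases hg with ⟨i, hi, hc⟩ | ⟨h1, h2⟩ | ⟨j, hj, rfl⟩
      · rcases hc with rfl | rfl
        · exact ⟨by omega, by omega, Or.inl ⟨i, hi, 0, by omega, by ring⟩⟩
        · exact ⟨by omega, by omega, Or.inl ⟨i, hi, 1, by omega, by ring⟩⟩
      · exact ⟨by omega, by omega, Or.inr (Or.inl h2)⟩
      · exact ⟨by omega, by omega, Or.inr (Or.inr ⟨j, hj, rfl⟩)⟩
    obtain ⟨hg1, hg2, hg3⟩ := hglb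
    rcases hQg with rfl | ⟨-, hne⟩ | hge | ⟨hge, hmod⟩
    · omega
    · exact hne rfl
    · omega
    · rcases hg3 with ⟨i, hi, s, hs, rfl⟩ | h | ⟨j, hj, rfl⟩ <;> omega
  · -- cardinality
    classical
    set F1 : Finset ℕ := (Finset.range t).image (fun i => n - 2*t + 4*i) with hF1
    set F2 : Finset ℕ := (Finset.range t).image (fun i => n - 2*t + 4*i + 1) with hF2
    set F3 : Finset ℕ := Finset.Icc (n + 2*t) (2*n - 4*t - 2) with hF3
    set F4 : Finset ℕ := (Finset.range t).image (fun j => 2*n - 4*t + 4*j - 1) with hF4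
    have hset : Gset n t = ↑(F1 ∪ F2 ∪ F3 ∪ F4) := by
      ext m
      simp only [Gset, Set.mem_setOf_eq, Finset.coe_union, Set.mem_union, hF1, hF2, hF3, hF4,
        Finset.coe_image, Finset.coe_Icc, Set.mem_image, Finset.mem_coe, Finset.mem_range,
        Set.mem_Icc]
      constructor
      · rintro (⟨i, hi, rfl | rfl⟩ | h | ⟨j, hj, rfl⟩)
        · exact Or.inl (Or.inl (Or.inl ⟨i, hi, rfl⟩))
        · exact Or.inl (Or.inl (Or.inr ⟨i, hi, rfl⟩))
        · exact Or.inl (Or.inr h)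
        · exact Or.inr ⟨j, hj, rfl⟩
      · rintro (((⟨i, hi, rfl⟩ | ⟨i, hi, rfl⟩) | h) | ⟨j, hj, rfl⟩)
        · exact Or.inl ⟨i, hi, Or.inl rfl⟩
        · exact Or.inl ⟨i, hi, Or.inr rfl⟩
        · exact Or.inr (Or.inl h)
        · exact Or.inr (Or.inr ⟨j, hj, rfl⟩)
    rw [hset, Set.ncard_coe_finset]
    have hc1 : F1.card = t := by
      rw [hF1, Finset.card_image_of_injOn, Finset.card_range]
      intro a _ b _ h; dsimp only at h; omega
    have hc2 : F2.card = t := by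
      rw [hF2, Finset.card_image_of_injOn, Finset.card_range]
      intro a _ b _ h; dsimp only at h; omega
    have hc3 : F3.card = n - 6*t - 1 := by
      rw [hF3, Nat.card_Icc]; omega
    have hc4 : F4.card = t := by
      rw [hF4, Finset.card_image_of_injOn, Finset.card_range]
      intro a ha b hb h
      simp only [Finset.coe_range, Set.mem_Iio] at ha hb
      dsimp only at h
      omega
    have hd12 : Disjoint F1 F2 := by
      rw [Finset.disjoint_left]
      rintro m hm1 hm2
      simp only [hF1, hF2, Finset.mem_image, Finset.mem_range] at hm1 hm2
      obtain ⟨a, ha, rfl⟩ := hm1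
      obtain ⟨b, hb, hbe⟩ := hm2
      omega
    have hd123 : Disjoint (F1 ∪ F2) F3 := by
      rw [Finset.disjoint_left]
      rintro m hm1 hm2
      simp only [hF1, hF2, hF3, Finset.mem_union, Finset.mem_image, Finset.mem_range,
        Finset.mem_Icc] at hm1 hm2
      rcases hm1 with ⟨a, ha, rfl⟩ | ⟨a, ha, rfl⟩ <;> omega
    have hd4 : Disjoint (F1 ∪ F2 ∪ F3) F4 := by
      rw [Finset.disjoint_left]
      rintro m hm1 hm2
      simp only [hF1, hF2, hF3, hF4, Finset.mem_union, Finset.mem_image, Finset.mem_range,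
        Finset.mem_Icc] at hm1 hm2
      obtain ⟨b, hb, rfl⟩ := hm2
      rcases hm1 with (⟨a, ha, ha'⟩ | ⟨a, ha, ha'⟩) | h <;> omega
    rw [Finset.card_union_of_disjoint hd4, Finset.card_union_of_disjoint hd123,
      Finset.card_union_of_disjoint hd12, hc1, hc2, hc3, hc4]
    omega
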